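/- arXiv:0710.4046 — 2 statements merged into one kernel-verified Lean document; each statement's English description precedes it below -/
import Mathlib

section
/- Let X be a complex random variable with finitely many values, zero mean, and E[|X|^2] = 1. Write X = X_r + i X_i with X_r, X_i real. Then the quantity c2 = -(E[X_r^2]^2 + E[X_i^2]^2 + 2 E[X_r X_i]^2) satisfies -1 ≤ c2 ≤ -1/2, with c2 = -1/2 attained if and only if E[X_r X_i] = 0 and E[X_r^2] = E[X_i^2] = 1/2. -/
/-- For a zero-mean, unit-energy finite complex constellation, the second-order capacity
coefficient `c₂ = -(E[Xr²]² + E[Xi²]² + 2 E[Xr Xi]²)` satisfies `-1 ≤ c₂ ≤ -1/2`, with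
equality `c₂ = -1/2` iff the real and imaginary parts are uncorrelated with equal energy. -/
theorem c2_bounds {ι : Type*} [Fintype ι] (p : ι → ℝ) (x : ι → ℂ)
    (hp : ∀ i, 0 ≤ p i) (hsum : ∑ i, p i = 1)
    (hmean : ∑ i, (p i : ℂ) * x i = 0)
    (henergy : ∑ i, p i * ‖x i‖ ^ 2 = 1) :
    let Er : ℝ := ∑ i, p i * (x i).re ^ 2
    let Ei : ℝ := ∑ i, p i * (x i).im ^ 2
    let Eri : ℝ := ∑ i, p i * ((x i).re * (x i).im)
    let c2 : ℝ := -(Er ^ 2 + Ei ^ 2 + 2 * Eri ^ 2)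
    (-1 ≤ c2 ∧ c2 ≤ -(1 / 2)) ∧
    (c2 = -(1 / 2) ↔ (Eri = 0 ∧ Er = 1 / 2 ∧ Ei = 1 / 2)) := by
  intro Er Ei Eri c2
  have hEsum : Er + Ei = 1 := by
    have : ∀ i, p i * ‖x i‖ ^ 2
        = p i * (x i).re ^ 2 + p i * (x i).im ^ 2 := by
      intro i
      rw [Complex.sq_norm, Complex.normSq_apply]
      ring
    rw [← henergy, Finset.sum_congr rfl (fun i _ => this i), Finset.sum_add_distrib]
  -- Cauchy–Schwarz: Eri² ≤ Er * Ei
  have hcs : Eri ^ 2 ≤ Er * Ei := by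
    have h := Finset.sum_mul_sq_le_sq_mul_sq Finset.univ
      (fun i => Real.sqrt (p i) * (x i).re) (fun i => Real.sqrt (p i) * (x i).im)
    have hsq : ∀ i, Real.sqrt (p i) * Real.sqrt (p i) = p i := fun i =>
      Real.mul_self_sqrt (hp i)
    simp only [mul_pow, Real.sq_sqrt (hp _)] at h
    calc Eri ^ 2 = (∑ i, (Real.sqrt (p i) * (x i).re) * (Real.sqrt (p i) * (x i).im)) ^ 2 := by
          congr 1; apply Finset.sum_congr rfl; intro i _
          rw [show (Real.sqrt (p i) * (x i).re) * (Real.sqrt (p i) * (x i).im)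
              = (Real.sqrt (p i) * Real.sqrt (p i)) * ((x i).re * (x i).im) by ring, hsq]
      _ ≤ Er * Ei := h
  have hEr : 0 ≤ Er := Finset.sum_nonneg fun i _ => mul_nonneg (hp i) (sq_nonneg _)
  have hEi : 0 ≤ Ei := Finset.sum_nonneg fun i _ => mul_nonneg (hp i) (sq_nonneg _)
  constructor
  · constructor
    · show -1 ≤ c2
      simp only [c2]
      nlinarith [sq_nonneg (Er - Ei)]
    · show c2 ≤ -(1/2)
      simp only [c2]
      nlinarith [sq_nonneg (Er - Ei), sq_nonneg Eri]
  · constructor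
    · intro h
      simp only [c2] at h
      refine ⟨?_, ?_, ?_⟩ <;> nlinarith [sq_nonneg (Er - Ei), sq_nonneg Eri]
    · rintro ⟨h1, h2, h3⟩
      simp only [c2, h1, h2, h3]; norm_num
end

section
/- Fix reals c11 > 0, c21, c12 > 0, c22, and ΔW ≠ 0. Define, for small s > 0, ΔP(s) as the root of (c22·s)·(ΔP)^2 + c12·ΔW·ΔP - (c11 + c21·s)·ΔW = 0 that tends to c11/c12 as s → 0 (the root given by the + branch of the quadratic formula when c22 < 0). Then ΔP(s) = c11/c12 + (c21/c12 - c22·c11^2/(c12^3·ΔW))·s + o(s) as s → 0⁺. -/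
open Filter Topology Asymptotics

/-- First-order expansion of the power ratio in the power–bandwidth trade-off: if
`ΔP(s)` is a root of `(c₂₂ s)·ΔP² + c₁₂·ΔW·ΔP - (c₁₁ + c₂₁ s)·ΔW = 0` tending to
`c₁₁/c₁₂` as `s → 0⁺`, then
`ΔP(s) = c₁₁/c₁₂ + (c₂₁/c₁₂ - c₂₂·c₁₁²/(c₁₂³·ΔW))·s + o(s)`. -/
theorem tradeoff_power_expansion (c11 c21 c12 c22 ΔW : ℝ)
    (hc11 : 0 < c11) (hc12 : 0 < c12) (hΔW : ΔW ≠ 0) (ΔP : ℝ → ℝ)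
    (hroot : ∀ᶠ s in 𝓝[>] (0 : ℝ),
      (c22 * s) * (ΔP s) ^ 2 + c12 * ΔW * ΔP s - (c11 + c21 * s) * ΔW = 0)
    (hlim : Tendsto ΔP (𝓝[>] (0 : ℝ)) (𝓝 (c11 / c12))) :
    (fun s => ΔP s - (c11 / c12 + (c21 / c12 - c22 * c11 ^ 2 / (c12 ^ 3 * ΔW)) * s))
      =o[𝓝[>] (0 : ℝ)] fun s => s := by
  set a : ℝ := c11 / c12 with ha
  set C : ℝ := -(c22 / (c12 * ΔW)) with hC
  have hc12' : c12 ≠ 0 := ne_of_gt hc12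
  -- the coefficient tends to 0
  have h1 : Tendsto (fun s => C * (ΔP s ^ 2 - a ^ 2)) (𝓝[>] (0 : ℝ)) (𝓝 0) := by
    have : Tendsto (fun s => ΔP s ^ 2 - a ^ 2) (𝓝[>] (0 : ℝ)) (𝓝 (a ^ 2 - a ^ 2)) :=
      ((hlim.pow 2).sub tendsto_const_nhds)
    have := (tendsto_const_nhds (x := C)).mul (by simpa using this :
        Tendsto (fun s => ΔP s ^ 2 - a ^ 2) (𝓝[>] (0 : ℝ)) (𝓝 0))
    simpa only [mul_zero] using this
  have h2 : (fun s => C * (ΔP s ^ 2 - a ^ 2) * s) =o[𝓝[>] (0 : ℝ)] fun s => s := by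
    have := (Asymptotics.isLittleO_one_iff ℝ).2 h1
    simpa using this.mul_isBigO (Asymptotics.isBigO_refl (fun s : ℝ => s) (𝓝[>] (0 : ℝ)))
  refine h2.congr' ?_ EventuallyEq.rfl
  filter_upwards [hroot] with s hs
  rw [ha, hC]
  field_simp
  linear_combination (-(c12 ^ 2)) * hs
end
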